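/- Let p be an odd prime and n ≥ 2. Then every bijective affine map of (Z/pZ)^n (i.e., every map of the form v ↦ v₀ + A·v with A an invertible n×n matrix over F_p) has a cycle structure with more than one cycle; equivalently, no affine permutation of (Z/pZ)^n acts as a single cycle of length p^n. -/

import Mathlib

/-- The largest cycle length ("Λ-value") of a self-map of a set. -/
noncomputable def maxCycleLen {X : Type*} (f : X → X) : ℕ :=
  sSup (Set.range fun x => Function.minimalPeriod f x)

lemma aux_three_pow : ∀ n : ℕ, 2 ≤ n → n + 1 ≤ 3 ^ (n - 1) := by
  intro n hn
  induction n with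
  | zero => omega
  | succ m ih =>
    rcases Nat.lt_or_ge m 2 with h | h
    · have hm1 : m = 1 := by omega
      subst hm1; norm_num
    · have h1 := ih h
      have h2 : (m + 1 - 1) = (m - 1) + 1 := by omega
      rw [h2, pow_succ]
      have h3 : 1 ≤ 3 ^ (m - 1) := Nat.one_le_pow _ _ (by omega)
      omega

/-- For an odd prime `p` and `n ≥ 2`, no bijective affine map
`v ↦ v₀ + A·v` of `(ℤ/pℤ)^n` acts as a single cycle of length `p^n`. -/
theorem stmt16 (p : ℕ) (hp : p.Prime) (hodd : Odd p) (n : ℕ) (hn : 2 ≤ n)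
    (v₀ : Fin n → ZMod p)
    (A : (Fin n → ZMod p) ≃ₗ[ZMod p] (Fin n → ZMod p)) :
    maxCycleLen (fun v => v₀ + A v) ≠ p ^ n := by
  have hFact : Fact p.Prime := ⟨hp⟩
  intro hmax
  unfold maxCycleLen at hmax
  set f : (Fin n → ZMod p) → Fin n → ZMod p := fun v => v₀ + A v with hf
  -- obtain a point of minimal period p ^ n
  have hne : (Set.range fun x => Function.minimalPeriod f x).Nonempty :=
    Set.range_nonempty _
  have hbdd : BddAbove (Set.range fun x => Function.minimalPeriod f x) :=
    (Set.finite_range _).bddAbove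
  obtain ⟨x, hx⟩ : ∃ x, Function.minimalPeriod f x = p ^ n := by
    have h := Nat.sSup_mem hne hbdd
    rw [hmax] at h
    exact h
  -- card of (Fin n → ZMod p) is p ^ n
  have hcard : Fintype.card (Fin n → ZMod p) = p ^ n := by
    simp [Fintype.card_fun, ZMod.card]
  -- the orbit map is bijective
  have hinj : Function.Injective (fun i : Fin (p ^ n) => f^[(i : ℕ)] x) := by
    intro i j hij
    have := Function.iterate_injOn_Iio_minimalPeriod (f := f) (x := x)
      (by rw [hx]; exact Set.mem_Iio.2 i.isLt) (by rw [hx]; exact Set.mem_Iio.2 j.isLt) hij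
    exact Fin.ext this
  have hsurj : Function.Surjective (fun i : Fin (p ^ n) => f^[(i : ℕ)] x) := by
    have hc : Fintype.card (Fin (p ^ n)) = Fintype.card (Fin n → ZMod p) := by simp [hcard]
    exact ((Fintype.bijective_iff_injective_and_card _).2 ⟨hinj, hc⟩).2
  -- f^[p^n] = id
  have hxper : f^[p ^ n] x = x := by
    rw [← hx]; exact Function.iterate_minimalPeriod
  have hid : ∀ v : (Fin n → ZMod p), f^[p ^ n] v = v := by
    intro v
    obtain ⟨i, rfl⟩ := hsurj v
    calc f^[p ^ n] (f^[(i : ℕ)] x) = f^[(i : ℕ)] (f^[p ^ n] x) := by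
          rw [← Function.iterate_add_apply, ← Function.iterate_add_apply, Nat.add_comm]
      _ = f^[(i : ℕ)] x := by rw [hxper]
  -- the augmented linear map B on (Fin n → ZMod p) × ZMod p
  set B : Module.End (ZMod p) ((Fin n → ZMod p) × ZMod p) :=
    { toFun := fun w => (w.2 • v₀ + A w.1, w.2)
      map_add' := by
        intro a b
        ext <;> simp [add_smul] <;> ring
      map_smul' := by
        intro c a
        ext <;> simp [smul_smul, smul_add] } with hB
  have hBpow : ∀ (k : ℕ) (v : (Fin n → ZMod p)) (t : ZMod p),
      (B ^ k) (v, t) = (t • (f^[k] 0) + (A ^ k : (Fin n → ZMod p) ≃ₗ[ZMod p] _) v, t) := by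
    intro k
    induction k with
    | zero => intro v t; simp
    | succ k ih =>
      intro v t
      have hc : f^[k + 1] 0 = v₀ + A (f^[k] 0) := by
        rw [Function.iterate_succ_apply']
      have hpo : ∀ w : (Fin n → ZMod p), (A ^ (k+1) : (Fin n → ZMod p) ≃ₗ[ZMod p] (Fin n → ZMod p)) w = A ((A ^ k : (Fin n → ZMod p) ≃ₗ[ZMod p] (Fin n → ZMod p)) w) := by
        intro w; rw [pow_succ']; rfl
      rw [pow_succ', Module.End.mul_apply, ih]
      simp only [hB, LinearMap.coe_mk, AddHom.coe_mk, hc, hpo]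
      refine Prod.ext ?_ rfl
      show t • v₀ + A (t • f^[k] 0 + (A ^ k : (Fin n → ZMod p) ≃ₗ[ZMod p] (Fin n → ZMod p)) v) =
        t • (v₀ + A (f^[k] 0)) + A ((A ^ k : (Fin n → ZMod p) ≃ₗ[ZMod p] (Fin n → ZMod p)) v)
      rw [map_add, map_smul, smul_add]
      abel
  -- also f^[k] v = f^[k] 0 + A^k v
  have hfk : ∀ (k : ℕ) (v : (Fin n → ZMod p)),
      f^[k] v = f^[k] 0 + (A ^ k : (Fin n → ZMod p) ≃ₗ[ZMod p] _) v := by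
    intro k
    induction k with
    | zero => intro v; simp
    | succ k ih =>
      intro v
      have hpo : ∀ w : (Fin n → ZMod p), (A ^ (k+1) : (Fin n → ZMod p) ≃ₗ[ZMod p] (Fin n → ZMod p)) w = A ((A ^ k : (Fin n → ZMod p) ≃ₗ[ZMod p] (Fin n → ZMod p)) w) := by
        intro w; rw [pow_succ']; rfl
      rw [Function.iterate_succ_apply', Function.iterate_succ_apply', ih]
      show v₀ + A (f^[k] 0 + (A ^ k : (Fin n → ZMod p) ≃ₗ[ZMod p] (Fin n → ZMod p)) v) = (v₀ + A (f^[k] 0)) + _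
      rw [map_add, hpo]
      abel
  -- B ^ (p ^ n) = 1
  have hApow : ∀ v : (Fin n → ZMod p), (A ^ (p ^ n) : (Fin n → ZMod p) ≃ₗ[ZMod p] _) v = v := by
    intro v
    have h1 := hid v
    have h2 := hid 0
    rw [hfk (p ^ n) v, h2] at h1
    simpa using h1
  have hB1 : B ^ (p ^ n) = 1 := by
    apply LinearMap.ext
    rintro ⟨v, t⟩
    rw [hBpow]
    have h2 : f^[p ^ n] 0 = (0 : (Fin n → ZMod p)) := hid 0
    simp [h2, hApow v]
  -- char p
  have hchar : CharP (Module.End (ZMod p) ((Fin n → ZMod p) × ZMod p)) p :=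
    charP_of_injective_algebraMap' (ZMod p) p
  -- M := B - 1 is nilpotent
  set M : Module.End (ZMod p) ((Fin n → ZMod p) × ZMod p) := B - 1 with hM
  have hMpow : ∀ m : ℕ, M ^ p ^ m = B ^ p ^ m - 1 := by
    intro m
    haveI := hchar
    rw [hM, sub_pow_char_pow_of_commute p m (Commute.one_right B), one_pow]
  have hMnil : IsNilpotent M := ⟨p ^ n, by rw [hMpow, hB1, sub_self]⟩
  -- finrank of (Fin n → ZMod p) × ZMod p is n + 1
  have hrank : Module.finrank (ZMod p) ((Fin n → ZMod p) × ZMod p) = n + 1 := by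
    simp [Module.finrank_prod, Module.finrank_pi]
  have hMfr : M ^ (n + 1) = 0 := by
    have h := hMnil.charpoly_eq_X_pow_finrank
    rw [hrank] at h
    have := M.aeval_self_charpoly
    rw [h] at this
    simpa using this
  -- p ^ (n-1) ≥ n + 1
  have hple : 3 ≤ p := by
    obtain ⟨k, hk⟩ := hodd
    have := hp.two_le
    omega
  have hineq : n + 1 ≤ p ^ (n - 1) :=
    le_trans (aux_three_pow n hn) (Nat.pow_le_pow_left hple _)
  -- M ^ (p ^ (n-1)) = 0
  have hM0 : M ^ p ^ (n - 1) = 0 := by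
    obtain ⟨k, hk⟩ : ∃ k, p ^ (n - 1) = (n + 1) + k := ⟨p ^ (n - 1) - (n + 1), by omega⟩
    rw [hk, pow_add, hMfr, zero_mul]
  have hBsmall : B ^ p ^ (n - 1) = 1 := by
    have := hMpow (n - 1)
    rw [hM0] at this
    exact sub_eq_zero.mp this.symm
  -- f^[p ^ (n-1)] x = x
  have hxsmall : f^[p ^ (n - 1)] x = x := by
    have hb : (B ^ p ^ (n - 1)) ((x : (Fin n → ZMod p)), (1 : ZMod p)) = (x, 1) := by
      rw [hBsmall]; rfl
    rw [hBpow] at hb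
    have h1 := congrArg Prod.fst hb
    simp only [one_smul] at h1
    rw [hfk]
    exact h1
  have : p ^ n ≤ p ^ (n - 1) := by
    rw [← hx]
    exact Function.IsPeriodicPt.minimalPeriod_le
      (pow_pos hp.pos _) hxsmall
  have : p ^ (n - 1) < p ^ n := Nat.pow_lt_pow_right hp.one_lt (by omega)
  omega
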